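/- arXiv:1211.6575 — 4 statements merged into one kernel-verified Lean document; each statement's English description precedes it below -/
import Mathlib

section
/- Let G be a finite nonabelian simple group and let K be a subgroup of a finite direct power G^m such that the projection of K to each coordinate copy of G is a proper subgroup of G. Then no composition factor (Jordan–Hölder factor) of K is isomorphic to G. -/
/-- `IsCompositionFactorOf S K` : the group `S` appears (up to isomorphism) as a
factor of some composition series of `K`. -/
def IsCompositionFactorOf (S : Type*) [Group S] (K : Type*) [Group K] : Prop :=
  ∃ (n : ℕ) (c : ℕ → Subgroup K),
    c 0 = ⊥ ∧ c n = ⊤ ∧ (∀ i, i < n → c i ≤ c (i + 1)) ∧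
    (∀ i, i < n → ∃ _ : ((c i).subgroupOf (c (i + 1))).Normal,
      IsSimpleGroup ((c (i + 1)) ⧸ (c i).subgroupOf (c (i + 1)))) ∧
    ∃ i, i < n ∧ ∃ _ : ((c i).subgroupOf (c (i + 1))).Normal,
      Nonempty (((c (i + 1)) ⧸ (c i).subgroupOf (c (i + 1))) ≃* S)

/-- Key lemma: if a group `L` embeds into `G^m` and surjects onto the finite
simple group `G`, then some coordinate projection of `L` is surjective. -/
lemma aux_proj_surj {G : Type*} [Group G] [Finite G] [IsSimpleGroup G] :
    ∀ (m : ℕ) (L : Type*) [Group L] (ψ : L →* (Fin m → G)) (φ : L →* G),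
      Function.Injective ψ → Function.Surjective φ →
      ∃ i : Fin m, Function.Surjective (fun l => ψ l i) := by
  intro m
  induction m with
  | zero =>
    intro L _ ψ φ hψ hφ
    exfalso
    haveI : Subsingleton L := ⟨fun a b => hψ (Subsingleton.elim _ _)⟩
    obtain ⟨a, b, hab⟩ := exists_pair_ne G
    obtain ⟨la, rfl⟩ := hφ a
    obtain ⟨lb, rfl⟩ := hφ b
    exact hab (congrArg φ (Subsingleton.elim la lb))
  | succ m ih =>
    intro L _ ψ φ hψ hφ
    haveI : Finite L := Finite.of_injective ψ hψ
    set p : L →* G := (Pi.evalMonoidHom (fun _ => G) 0).comp ψ with hp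
    set M : Subgroup L := p.ker with hM
    have hnorm : (M.map φ).Normal := Subgroup.Normal.map inferInstance φ hφ
    rcases IsSimpleGroup.eq_bot_or_eq_top_of_normal (M.map φ) hnorm with hbot | htop
    · -- M ≤ ker φ, so the first coordinate projection is surjective by cardinality
      have hker : M ≤ φ.ker := by
        intro x hx
        have : φ x ∈ M.map φ := Subgroup.mem_map_of_mem φ hx
        rw [hbot] at this
        simpa [MonoidHom.mem_ker] using this
      have hsurj : Function.Surjective
          (QuotientGroup.map M φ.ker (MonoidHom.id L) (by simpa using hker)) := by
        intro y
        obtain ⟨x, rfl⟩ := QuotientGroup.mk_surjective y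
        exact ⟨QuotientGroup.mk x, rfl⟩
      have h1 : Nat.card (L ⧸ φ.ker) = Nat.card G :=
        Nat.card_congr (QuotientGroup.quotientKerEquivOfSurjective φ hφ).toEquiv
      have h2 : Nat.card (L ⧸ M) = Nat.card p.range :=
        Nat.card_congr (QuotientGroup.quotientKerEquivRange p).toEquiv
      have h3 : Nat.card (L ⧸ φ.ker) ≤ Nat.card (L ⧸ M) :=
        Nat.card_le_card_of_surjective _ hsurj
      have hcard : Nat.card G ≤ Nat.card p.range := by omega
      have hle : Nat.card p.range ≤ Nat.card G :=
        Nat.card_le_card_of_injective _ Subtype.val_injective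
      have htop' : p.range = ⊤ :=
        Subgroup.eq_top_of_card_eq _ (le_antisymm hle hcard)
      have hpsurj : Function.Surjective p := MonoidHom.range_eq_top.mp htop'
      exact ⟨0, hpsurj⟩
    · -- φ restricted to M is still surjective; M embeds into G^m via the tail
      set ψ' : M →* (Fin m → G) :=
        Pi.monoidHom (fun i => (Pi.evalMonoidHom (fun _ => G) i.succ).comp
          (ψ.comp M.subtype)) with hψ'
      have hψ'inj : Function.Injective ψ' := by
        intro a b h
        apply Subtype.ext
        apply hψ
        funext j
        refine Fin.cases ?_ ?_ j
        · have ha : ψ (a : L) 0 = 1 := a.2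
          have hb : ψ (b : L) 0 = 1 := b.2
          rw [ha, hb]
        · intro i
          exact congrFun h i
      have hφ'surj : Function.Surjective (φ.comp M.subtype) := by
        intro g
        have : g ∈ M.map φ := htop ▸ Subgroup.mem_top g
        obtain ⟨x, hx, hxg⟩ := this
        exact ⟨⟨x, hx⟩, hxg⟩
      obtain ⟨i, hi⟩ := ih M ψ' (φ.comp M.subtype) hψ'inj hφ'surj
      refine ⟨i.succ, ?_⟩
      intro g
      obtain ⟨x, hx⟩ := hi g
      exact ⟨(x : L), hx⟩

/-- If every coordinate projection of `K ≤ G^m` is proper, then the finite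
nonabelian simple group `G` is not a composition factor of `K`. -/
theorem no_comp_factor_of_proper_projections (G : Type*) [Group G] [Finite G]
    [IsSimpleGroup G] (hna : ∃ a b : G, a * b ≠ b * a)
    (m : ℕ) (K : Subgroup (Fin m → G))
    (hproper : ∀ i : Fin m, ¬ Function.Surjective (fun k : K => (k : Fin m → G) i)) :
    ¬ IsCompositionFactorOf G K := by
  rintro ⟨n, c, h0, htop, hmono, hsimple, i, hi, hnorm, ⟨e⟩⟩
  haveI := hnorm
  set L := ↥(c (i + 1))
  set ψ : L →* (Fin m → G) := K.subtype.comp (c (i + 1)).subtype with hψdef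
  have hψinj : Function.Injective ψ :=
    Subtype.val_injective.comp Subtype.val_injective
  set φ : G ≃* G := MulEquiv.refl G
  set φ' : L →* G := e.toMonoidHom.comp (QuotientGroup.mk' ((c i).subgroupOf (c (i + 1)))) with hφ'
  have hφ'surj : Function.Surjective φ' :=
    e.surjective.comp (QuotientGroup.mk'_surjective _)
  obtain ⟨i₀, hi₀⟩ := aux_proj_surj m L ψ φ' hψinj hφ'surj
  apply hproper i₀
  intro g
  obtain ⟨l, hl⟩ := hi₀ g
  exact ⟨(l : K), hl⟩
end

section
/- (P. Hall) Let G be a finite nonabelian simple group and F_2 the free group of rank 2. The largest r such that G^r is a quotient of F_2 equals the number of Aut(G)-orbits on generating pairs of G, i.e., r = ℓ/|Aut(G)| where ℓ = |{(a,b) ∈ G² : ⟨a,b⟩ = G}|. -/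
open Subgroup

section HallAux

variable {G : Type*} [Group G]

/-- The action of `MulAut G` on generating pairs. -/
instance genPairMulAction (G : Type*) [Group G] :
    MulAction (MulAut G) {p : G × G // Subgroup.closure {p.1, p.2} = ⊤} where
  smul φ p := ⟨(φ p.1.1, φ p.1.2), by
    have := congrArg (Subgroup.map φ.toMonoidHom) p.2
    rwa [MonoidHom.map_closure, Set.image_pair,
      Subgroup.map_top_of_surjective _ φ.surjective] at this⟩
  one_smul p := Subtype.ext (Prod.ext rfl rfl)
  mul_smul φ ψ p := Subtype.ext (Prod.ext rfl rfl)

lemma genPair_smul_fst (φ : MulAut G) (p : {p : G × G // Subgroup.closure {p.1, p.2} = ⊤}) :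
    (φ • p).1.1 = φ p.1.1 := rfl

lemma genPair_smul_snd (φ : MulAut G) (p : {p : G × G // Subgroup.closure {p.1, p.2} = ⊤}) :
    (φ • p).1.2 = φ p.1.2 := rfl

lemma center_eq_bot_of_nonabelian [IsSimpleGroup G] (hna : ∃ a b : G, a * b ≠ b * a) :
    Subgroup.center G = ⊥ := by
  rcases (Subgroup.center G).normal_of_characteristic.eq_bot_or_eq_top with h | h
  · exact h
  · exfalso
    rcases hna with ⟨a, b, hab⟩
    have : a ∈ Subgroup.center G := by rw [h]; trivial
    exact hab ((Subgroup.mem_center_iff.mp this b).symm)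

lemma exists_ne_one_of_nonabelian (hna : ∃ a b : G, a * b ≠ b * a) : ∃ g : G, g ≠ 1 := by
  rcases hna with ⟨a, b, hab⟩
  refine ⟨a, fun h => hab ?_⟩
  subst h; simp

lemma list_prod_ite {M : Type*} [Monoid M] {ι : Type*} [DecidableEq ι]
    (l : List ι) (hl : l.Nodup) (j : ι) (hj : j ∈ l) (x : ι → M) :
    (l.map (fun i => if j = i then x i else 1)).prod = x j := by
  induction l with
  | nil => simp at hj
  | cons c t ih =>
    simp only [List.map_cons, List.prod_cons]
    rcases List.mem_cons.mp hj with h | h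
    · subst h
      rw [if_pos rfl, List.prod_eq_one, mul_one]
      intro y hy
      rcases List.mem_map.mp hy with ⟨i, hi, rfl⟩
      rw [if_neg]
      rintro rfl
      exact (List.nodup_cons.mp hl).1 hi
    · rw [if_neg, one_mul, ih (List.nodup_cons.mp hl).2 h]
      rintro rfl
      exact (List.nodup_cons.mp hl).1 h

lemma pi_eq_list_prod_mulSingle {n : ℕ} (x : Fin n → G) :
    ((List.finRange n).map fun i => Pi.mulSingle i (x i)).prod = x := by
  funext j
  have hfun : ((Pi.evalMonoidHom (fun _ : Fin n => G) j) ∘ fun i => Pi.mulSingle i (x i)) =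
      fun i => if j = i then x i else 1 := by
    funext i
    simp [Pi.evalMonoidHom, Pi.mulSingle_apply]
  have h := map_list_prod (Pi.evalMonoidHom (fun _ : Fin n => G) j)
      ((List.finRange n).map fun i => Pi.mulSingle i (x i))
  rw [List.map_map, hfun,
    list_prod_ite _ (List.nodup_finRange n) j (List.mem_finRange j)] at h
  exact h

/-- Hard direction: pairs that each generate `G` and are pairwise inequivalent under
`Aut(G)` generate the product. -/
lemma closure_pair_pi [Finite G] [IsSimpleGroup G]
    (hna : ∃ a b : G, a * b ≠ b * a) :
    ∀ (n : ℕ) (a b : Fin n → G),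
    (∀ i, Subgroup.closure {a i, b i} = ⊤) →
    (∀ i j, i ≠ j → ∀ φ : MulAut G, ¬(φ (a i) = a j ∧ φ (b i) = b j)) →
    Subgroup.closure {a, b} = (⊤ : Subgroup (Fin n → G)) := by
  intro n
  induction n with
  | zero =>
    intro a b _ _
    rw [Subgroup.eq_top_iff']
    intro x
    have : x = 1 := funext fun i => i.elim0
    rw [this]; exact Subgroup.one_mem _
  | succ n ih =>
    intro a b hgen hineq
    set H := Subgroup.closure {a, b} with hH
    have haH : a ∈ H := Subgroup.subset_closure (Set.mem_insert _ _)
    have hbH : b ∈ H := Subgroup.subset_closure (Set.mem_insert_of_mem _ rfl)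
    -- projection to the first n coordinates
    let π : (Fin (n + 1) → G) →* (Fin n → G) :=
      { toFun := fun x i => x i.castSucc
        map_one' := rfl
        map_mul' := fun _ _ => rfl }
    -- evaluation at the last coordinate
    let e : (Fin (n + 1) → G) →* G := Pi.evalMonoidHom (fun _ => G) (Fin.last n)
    have hπH : Subgroup.map π H = ⊤ := by
      rw [hH, MonoidHom.map_closure, Set.image_pair]
      exact ih (fun i => a i.castSucc) (fun i => b i.castSucc)
        (fun i => hgen i.castSucc)
        (fun i j hij φ => hineq i.castSucc j.castSucc
          (fun h => hij (Fin.castSucc_injective n h)) φ)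
    have heH : Subgroup.map e H = ⊤ := by
      rw [hH, MonoidHom.map_closure, Set.image_pair]
      exact hgen (Fin.last n)
    -- the subgroup of G carved out by H ∩ ker π
    set K : Subgroup G := Subgroup.map e (H ⊓ π.ker) with hK
    have hKnormal : K.Normal := by
      constructor
      intro k hk g
      rcases hk with ⟨m, hm, rfl⟩
      have hg : g ∈ Subgroup.map e H := by rw [heH]; trivial
      rcases hg with ⟨h, hh, rfl⟩
      refine ⟨h * m * h⁻¹, ⟨H.mul_mem (H.mul_mem hh hm.1) (H.inv_mem hh), ?_⟩, by
        simp [map_mul]⟩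
      have hm2 : π m = 1 := hm.2
      have : π (h * m * h⁻¹) = 1 := by
        rw [map_mul, map_mul, hm2, mul_one, map_inv, mul_inv_cancel]
      exact this
    -- elements of ker π are determined by their last coordinate
    have hker_eq : ∀ x y : Fin (n + 1) → G, π x = 1 → π y = 1 → e x = e y → x = y := by
      intro x y hx hy hxy
      funext i
      refine Fin.lastCases ?_ ?_ i
      · exact hxy
      · intro j
        have h1 := congrFun hx j
        have h2 := congrFun hy j
        simp only [Pi.one_apply] at h1 h2
        exact h1.trans h2.symm
    rcases hKnormal.eq_bot_or_eq_top with hKbot | hKtop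
    · -- K = ⊥ : H is the graph of a homomorphism
      exfalso
      have key : ∀ h₁ ∈ H, ∀ h₂ ∈ H, π h₁ = π h₂ → e h₁ = e h₂ := by
        intro h₁ hh₁ h₂ hh₂ hp
        have hmem : h₁ * h₂⁻¹ ∈ H ⊓ π.ker := by
          refine ⟨H.mul_mem hh₁ (H.inv_mem hh₂), ?_⟩
          have : π (h₁ * h₂⁻¹) = 1 := by rw [map_mul, map_inv, hp, mul_inv_cancel]
          exact this
        have : e (h₁ * h₂⁻¹) ∈ K := ⟨_, hmem, rfl⟩
        rw [hKbot, Subgroup.mem_bot] at this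
        rw [map_mul, map_inv] at this
        exact mul_inv_eq_one.mp this
      have hexists : ∀ x : Fin n → G, ∃ h, h ∈ H ∧ π h = x := by
        intro x
        have : x ∈ Subgroup.map π H := by rw [hπH]; trivial
        rcases this with ⟨h, hh, hph⟩
        exact ⟨h, hh, hph⟩
      choose σ hσH hσπ using hexists
      let ψ : (Fin n → G) →* G :=
        { toFun := fun x => e (σ x)
          map_one' := by
            show e (σ 1) = 1
            have := key _ (hσH 1) 1 H.one_mem (by rw [hσπ, map_one])
            rw [this, map_one]
          map_mul' := by
            intro x y
            show e (σ (x * y)) = e (σ x) * e (σ y)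
            have h1 : e (σ (x * y)) = e (σ x * σ y) :=
              key _ (hσH _) _ (H.mul_mem (hσH x) (hσH y))
                (by rw [hσπ, map_mul, hσπ, hσπ])
            rw [h1, map_mul] }
      have hψH : ∀ h ∈ H, ψ (π h) = e h := fun h hh => key _ (hσH _) h hh (hσπ _)
      have hψsurj : Function.Surjective ψ := by
        intro g
        have : g ∈ Subgroup.map e H := by rw [heH]; trivial
        rcases this with ⟨h, hh, rfl⟩
        exact ⟨π h, hψH h hh⟩
      -- ψ decomposes through coordinates
      have hdecomp : ∀ x : Fin n → G,
          ψ x = ((List.finRange n).map fun i => ψ (Pi.mulSingle i (x i))).prod := by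
        intro x
        conv_lhs => rw [← pi_eq_list_prod_mulSingle x]
        rw [map_list_prod, List.map_map]
        rfl
      -- some coordinate map is nontrivial
      have hnontriv : ∃ (i : Fin n) (g : G), ψ (Pi.mulSingle i g) ≠ 1 := by
        by_contra hcon
        push_neg at hcon
        rcases exists_ne_one_of_nonabelian hna with ⟨g, hg⟩
        rcases hψsurj g with ⟨x, hx⟩
        rw [hdecomp] at hx
        rw [List.prod_eq_one] at hx
        · exact hg hx.symm
        · intro y hy
          rcases List.mem_map.mp hy with ⟨i, _, rfl⟩
          exact hcon i (x i)
      rcases hnontriv with ⟨i₀, g₀, hg₀⟩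
      -- the range of ψ restricted to coordinate i₀
      set R : Subgroup G := (ψ.comp (MonoidHom.mulSingle (fun _ : Fin n => G) i₀)).range
        with hR
      have hcomm : ∀ j, j ≠ i₀ → ∀ g g',
          ψ (Pi.mulSingle i₀ g) * ψ (Pi.mulSingle j g') =
          ψ (Pi.mulSingle j g') * ψ (Pi.mulSingle i₀ g) := by
        intro j hj g g'
        rw [← map_mul, ← map_mul]
        exact congrArg ψ (Pi.mulSingle_commute (f := fun _ : Fin n => G)
          (Ne.symm hj) g g').eq
      have hRtop : R = ⊤ := by
        have hnorm : Subgroup.normalizer (R : Set G) = ⊤ := by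
          rw [Subgroup.eq_top_iff']
          intro g
          rcases hψsurj g with ⟨x, rfl⟩
          rw [hdecomp]
          apply Subgroup.list_prod_mem
          intro y hy
          rcases List.mem_map.mp hy with ⟨i, _, rfl⟩
          by_cases hi : i = i₀
          · subst hi
            exact Subgroup.le_normalizer ⟨x i, rfl⟩
          · rw [Subgroup.mem_normalizer_iff]
            intro h
            set c : G := ψ (Pi.mulSingle i (x i)) with hc
            have hcent : ∀ k ∈ R, c * k = k * c := by
              rintro k ⟨g', rfl⟩
              show ψ (Pi.mulSingle i (x i)) * ψ (Pi.mulSingle i₀ g') =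
                ψ (Pi.mulSingle i₀ g') * ψ (Pi.mulSingle i (x i))
              exact (hcomm i hi g' (x i)).symm
            constructor
            · intro hh
              have : c * h * c⁻¹ = h := by
                rw [hcent h hh, mul_assoc, mul_inv_cancel, mul_one]
              rw [this]
              exact hh
            · intro hk
              have h4 := hcent _ hk
              have h5 : c * (c * h * c⁻¹) = c * h :=
                h4.trans (by rw [mul_assoc, inv_mul_cancel, mul_one])
              have h6 : c * h * c⁻¹ = h := mul_left_cancel h5
              rw [← h6]
              exact hk
        have : R.Normal := Subgroup.normalizer_eq_top_iff.mp hnorm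
        rcases this.eq_bot_or_eq_top with hbot | htop
        · exfalso
          apply hg₀
          have : ψ (Pi.mulSingle i₀ g₀) ∈ R := ⟨g₀, rfl⟩
          rwa [hbot, Subgroup.mem_bot] at this
        · exact htop
      -- ψ ∘ mulSingle i₀ is an automorphism
      have hsurj₀ : Function.Surjective (fun g => ψ (Pi.mulSingle i₀ g)) := by
        intro g
        have : g ∈ R := by rw [hRtop]; trivial
        rcases this with ⟨g', hg'⟩
        exact ⟨g', hg'⟩
      have hbij₀ : Function.Bijective
          ⇑(ψ.comp (MonoidHom.mulSingle (fun _ : Fin n => G) i₀)) := by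
        rw [← Finite.surjective_iff_bijective]
        intro g
        rcases hsurj₀ g with ⟨g', hg'⟩
        exact ⟨g', hg'⟩
      let φ : MulAut G := MulEquiv.ofBijective _ hbij₀
      have hφ : ∀ g, φ g = ψ (Pi.mulSingle i₀ g) := fun g => rfl
      -- all other coordinate maps are trivial
      have htriv : ∀ j, j ≠ i₀ → ∀ g, ψ (Pi.mulSingle j g) = 1 := by
        intro j hj g
        have hcen : ψ (Pi.mulSingle j g) ∈ Subgroup.center G := by
          rw [Subgroup.mem_center_iff]
          intro z
          have : z ∈ R := by rw [hRtop]; trivial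
          rcases this with ⟨g', hg'⟩
          simp only [MonoidHom.comp_apply, MonoidHom.mulSingle_apply] at hg'
          rw [← hg']
          exact hcomm j hj g' g
        rw [center_eq_bot_of_nonabelian hna, Subgroup.mem_bot] at hcen
        exact hcen
      -- hence ψ x = φ (x i₀)
      have hψx : ∀ x : Fin n → G, ψ x = φ (x i₀) := by
        intro x
        rw [hdecomp x, hφ]
        have hmapeq : ((List.finRange n).map fun i => ψ (Pi.mulSingle i (x i))) =
            ((List.finRange n).map fun i =>
              if i₀ = i then (fun i' => ψ (Pi.mulSingle i' (x i'))) i else 1) := by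
          apply List.map_congr_left
          intro i _
          by_cases hi : i₀ = i
          · rw [if_pos hi]
          · rw [if_neg hi]
            exact htriv i (fun h => hi h.symm) (x i)
        rw [hmapeq, list_prod_ite _ (List.nodup_finRange n) i₀ (List.mem_finRange i₀)]
      -- contradiction with pairwise inequivalence
      have hlast_a : φ (a i₀.castSucc) = a (Fin.last n) := by
        have := hψH a haH
        rw [hψx] at this
        exact this
      have hlast_b : φ (b i₀.castSucc) = b (Fin.last n) := by
        have := hψH b hbH
        rw [hψx] at this
        exact this
      exact hineq i₀.castSucc (Fin.last n) (Fin.castSucc_lt_last i₀).ne φ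
        ⟨hlast_a, hlast_b⟩
    · -- K = ⊤ : H contains the last factor, hence is everything
      rw [Subgroup.eq_top_iff']
      intro x
      have hx : π x ∈ Subgroup.map π H := by rw [hπH]; trivial
      rcases hx with ⟨h, hh, hph⟩
      have hker : π (x * h⁻¹) = 1 := by rw [map_mul, map_inv, ← hph, mul_inv_cancel]
      have : e (x * h⁻¹) ∈ K := by rw [hKtop]; trivial
      rcases this with ⟨m, hm, hme⟩
      have hmk : π m = 1 := hm.2
      have heq : m = x * h⁻¹ := hker_eq m (x * h⁻¹) hmk hker hme
      have : x = m * h := by rw [heq, inv_mul_cancel_right]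
      rw [this]
      exact H.mul_mem hm.1 hh

/-- Easy direction: if a pair generates the product, its coordinates generate and
are pairwise inequivalent. -/
lemma of_closure_pair_pi (hna : ∃ a b : G, a * b ≠ b * a) {r : ℕ}
    (a b : Fin r → G) (h : Subgroup.closure {a, b} = (⊤ : Subgroup (Fin r → G))) :
    (∀ i, Subgroup.closure {a i, b i} = ⊤) ∧
    (∀ i j, i ≠ j → ∀ φ : MulAut G, ¬(φ (a i) = a j ∧ φ (b i) = b j)) := by
  constructor
  · intro i
    have := congrArg (Subgroup.map (Pi.evalMonoidHom (fun _ : Fin r => G) i)) h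
    rw [MonoidHom.map_closure, Set.image_pair,
      Subgroup.map_top_of_surjective _ (fun g => ⟨fun _ => g, rfl⟩)] at this
    exact this
  · rintro i j hij φ ⟨ha, hb⟩
    rcases exists_ne_one_of_nonabelian hna with ⟨g, hg⟩
    set D := MonoidHom.eqLocus
      (φ.toMonoidHom.comp (Pi.evalMonoidHom (fun _ : Fin r => G) i))
      (Pi.evalMonoidHom (fun _ : Fin r => G) j) with hD
    have hsub : ({a, b} : Set (Fin r → G)) ⊆ D := by
      rintro z (rfl | rfl)
      · exact ha
      · exact hb
    have : Subgroup.closure {a, b} ≤ D := (Subgroup.closure_le D).mpr hsub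
    rw [h] at this
    have hmem : (Pi.mulSingle j g : Fin r → G) ∈ D := this trivial
    have : φ ((Pi.mulSingle j g : Fin r → G) i) = (Pi.mulSingle j g : Fin r → G) j := hmem
    rw [Pi.mulSingle_eq_same] at this
    rw [Pi.mulSingle_apply, if_neg hij] at this
    rw [map_one] at this
    exact hg this.symm

/-- The free action of `MulAut G` on generating pairs. -/
lemma genPair_smul_free (φ : MulAut G)
    (p : {p : G × G // Subgroup.closure {p.1, p.2} = ⊤}) (h : φ • p = p) : φ = 1 := by
  have h1 : φ p.1.1 = p.1.1 := congrArg (fun q => q.1.1) h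
  have h2 : φ p.1.2 = p.1.2 := congrArg (fun q => q.1.2) h
  ext g
  have hEq : Set.EqOn (⇑φ.toMonoidHom) (⇑(MonoidHom.id G)) {p.1.1, p.1.2} := by
    rintro z (rfl | rfl)
    · exact h1
    · exact h2
  have := MonoidHom.eqOn_closure hEq (s := {p.1.1, p.1.2})
  rw [p.2] at this
  exact this (Set.mem_univ g)

end HallAux

/-- (P. Hall)  For a finite nonabelian simple group `G`, the largest `r` such
that `G^r` is a quotient of `F₂` equals `ℓ / |Aut(G)|`, where `ℓ` is the
number of generating pairs of `G`. -/
theorem hall_largest_power_quotient (G : Type*) [Group G] [Finite G]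
    [IsSimpleGroup G] (hna : ∃ a b : G, a * b ≠ b * a) :
    IsGreatest {r : ℕ | ∃ f : FreeGroup (Fin 2) →* (Fin r → G),
        Function.Surjective f}
      (Nat.card {p : G × G // Subgroup.closure {p.1, p.2} = ⊤} /
        Nat.card (MulAut G)) := by
  classical
  set X := {p : G × G // Subgroup.closure {p.1, p.2} = ⊤} with hX
  set Q := MulAction.orbitRel.Quotient (MulAut G) X with hQ
  -- the counting bijection
  have hbij : Function.Bijective (fun z : MulAut G × Q => z.1 • (Quotient.out z.2 : X)) := by
    constructor
    · rintro ⟨φ, ω⟩ ⟨φ', ω'⟩ hz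
      simp only at hz
      have horb : (Quotient.out ω' : X) ∈ MulAction.orbit (MulAut G) (Quotient.out ω : X) := by
        refine ⟨φ'⁻¹ * φ, ?_⟩
        show (φ'⁻¹ * φ) • (Quotient.out ω : X) = Quotient.out ω'
        rw [mul_smul, hz, inv_smul_smul]
      have hωω : ω = ω' := by
        have := Quotient.sound' (MulAction.orbitRel_apply.mpr horb)
        rw [show (Quotient.mk'' (Quotient.out ω') : Q) = ω' from Quotient.out_eq ω',
          show (Quotient.mk'' (Quotient.out ω) : Q) = ω from Quotient.out_eq ω] at this
        exact this.symm
      subst hωω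
      have : (φ'⁻¹ * φ) • (Quotient.out ω : X) = Quotient.out ω := by
        rw [mul_smul, hz, inv_smul_smul]
      have := genPair_smul_free _ _ this
      have hφφ : φ' = φ := inv_mul_eq_one.mp this
      rw [hφφ]
    · intro x
      set ω : Q := Quotient.mk'' x with hω
      have : (Quotient.out ω : X) ∈ MulAction.orbit (MulAut G) x := by
        apply MulAction.orbitRel_apply.mp
        exact Quotient.exact' ((Quotient.out_eq' ω).trans hω.symm)
      rcases this with ⟨φ, hφ⟩
      refine ⟨(φ⁻¹, ω), ?_⟩
      show φ⁻¹ • (Quotient.out ω : X) = x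
      rw [← hφ, inv_smul_smul]
  have hcard : Nat.card X = Nat.card (MulAut G) * Nat.card Q := by
    rw [← Nat.card_prod]
    exact (Nat.card_eq_of_bijective _ hbij).symm
  have hApos : Nat.card (MulAut G) ≠ 0 := Nat.card_pos.ne'
  have hr₀ : Nat.card X / Nat.card (MulAut G) = Nat.card Q := by
    rw [hcard, Nat.mul_div_cancel_left _ (Nat.pos_of_ne_zero hApos)]
  rw [hr₀]
  constructor
  · -- membership: there is a surjection onto G^(card Q)
    let eQ : Q ≃ Fin (Nat.card Q) := Finite.equivFin Q
    let p : Fin (Nat.card Q) → X := fun i => Quotient.out (eQ.symm i)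
    let a : Fin (Nat.card Q) → G := fun i => (p i).1.1
    let b : Fin (Nat.card Q) → G := fun i => (p i).1.2
    have hgen : ∀ i, Subgroup.closure {a i, b i} = ⊤ := fun i => (p i).2
    have hineq : ∀ i j, i ≠ j → ∀ φ : MulAut G, ¬(φ (a i) = a j ∧ φ (b i) = b j) := by
      rintro i j hij φ ⟨ha, hb⟩
      apply hij
      have hsm : φ • p i = p j := Subtype.ext (Prod.ext ha hb)
      have horb : (p j : X) ∈ MulAction.orbit (MulAut G) (p i) := ⟨φ, hsm⟩
      have : eQ.symm j = eQ.symm i := by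
        have := Quotient.sound' (MulAction.orbitRel_apply.mpr horb)
        rw [show (Quotient.mk'' (p j) : Q) = eQ.symm j from Quotient.out_eq _,
          show (Quotient.mk'' (p i) : Q) = eQ.symm i from Quotient.out_eq _] at this
        exact this
      have := eQ.symm.injective this
      exact this.symm
    have htop : Subgroup.closure {a, b} = (⊤ : Subgroup (Fin (Nat.card Q) → G)) :=
      closure_pair_pi hna _ a b hgen hineq
    refine ⟨FreeGroup.lift ![a, b], ?_⟩
    intro x
    rw [← MonoidHom.mem_range]
    have hle : Subgroup.closure {a, b} ≤ (FreeGroup.lift ![a, b]).range := by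
      rw [Subgroup.closure_le]
      rintro z (rfl | rfl)
      · exact ⟨FreeGroup.of 0, by rw [FreeGroup.lift_apply_of]; rfl⟩
      · exact ⟨FreeGroup.of 1, by rw [FreeGroup.lift_apply_of]; rfl⟩
    apply hle
    rw [htop]
    trivial
  · -- upper bound
    rintro r ⟨f, hf⟩
    set a : Fin r → G := fun i => f (FreeGroup.of 0) i with ha
    set b : Fin r → G := fun i => f (FreeGroup.of 1) i with hb
    have hrange : Set.range (FreeGroup.of : Fin 2 → FreeGroup (Fin 2)) =
        {FreeGroup.of 0, FreeGroup.of 1} := by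
      ext z
      constructor
      · rintro ⟨i, rfl⟩
        fin_cases i
        · exact Set.mem_insert _ _
        · exact Set.mem_insert_of_mem _ rfl
      · rintro (rfl | rfl)
        · exact ⟨0, rfl⟩
        · exact ⟨1, rfl⟩
    have htop : Subgroup.closure {a, b} = (⊤ : Subgroup (Fin r → G)) := by
      have h1 := congrArg (Subgroup.map f) (FreeGroup.closure_range_of (Fin 2))
      rw [Subgroup.map_top_of_surjective _ hf, hrange, MonoidHom.map_closure,
        Set.image_pair] at h1
      exact h1
    obtain ⟨hgen, hineq⟩ := of_closure_pair_pi hna a b htop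
    -- map each index to the orbit of its pair
    let gmap : Fin r → Q := fun i => Quotient.mk'' (⟨(a i, b i), hgen i⟩ : X)
    have hginj : Function.Injective gmap := by
      intro i j hij'
      by_contra hne
      have horb : (⟨(a i, b i), hgen i⟩ : X) ∈
          MulAction.orbit (MulAut G) (⟨(a j, b j), hgen j⟩ : X) :=
        MulAction.orbitRel_apply.mp (Quotient.exact' hij')
      rcases horb with ⟨φ, hφ⟩
      have h1 : φ (a j) = a i := congrArg (fun q : X => q.1.1) hφ
      have h2 : φ (b j) = b i := congrArg (fun q : X => q.1.2) hφ
      exact hineq j i (Ne.symm hne) φ ⟨h1, h2⟩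
    calc r = Nat.card (Fin r) := by rw [Nat.card_eq_fintype_card, Fintype.card_fin]
      _ ≤ Nat.card Q := Nat.card_le_card_of_injective gmap hginj
end

section
/- Let G be a finite nonabelian simple group, and let φ_1, ..., φ_ℓ be all the epimorphisms F_2 → G. The image H of the diagonal map (φ_1,...,φ_ℓ) : F_2 → G^ℓ consists exactly of those tuples (u_1,...,u_ℓ) such that for all i, j and α ∈ Aut(G) with α ∘ φ_i = φ_j, one has α(u_i) = u_j. -/
open Function

lemma pi_surj_factor {ι : Type*} [Fintype ι] {G : Type*} [Group G] [IsSimpleGroup G]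
    (hna : ∃ a b : G, a * b ≠ b * a)
    (ψ : (ι → G) →* G) (hψ : Function.Surjective ψ) :
    ∃ i : ι, ∃ α : G →* G, Function.Surjective α ∧
      ψ = α.comp (Pi.evalMonoidHom (fun _ => G) i) := by
  classical
  set Ψ : ι → (G →* G) := fun i => ψ.comp (MonoidHom.mulSingle (fun _ => G) i) with hΨ
  have hnorm : ∀ i, (Ψ i).range.Normal := by
    intro i
    constructor
    rintro x ⟨a, rfl⟩ g
    obtain ⟨y, rfl⟩ := hψ g
    refine ⟨y i * a * (y i)⁻¹, ?_⟩
    simp only [Ψ, MonoidHom.comp_apply, MonoidHom.mulSingle_apply]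
    rw [← map_inv, ← map_mul, ← map_mul]
    congr 1
    funext j
    by_cases h : j = i
    · subst h; simp [Pi.mulSingle]
    · simp [Pi.mulSingle_eq_of_ne h, Pi.mulSingle_eq_of_ne (Ne.symm h)]
  have hbt : ∀ i, (Ψ i).range = ⊥ ∨ (Ψ i).range = ⊤ := fun i => (hnorm i).eq_bot_or_eq_top
  by_cases hex : ∃ i, (Ψ i).range = ⊤
  · obtain ⟨i, hi⟩ := hex
    have huniq : ∀ j, j ≠ i → (Ψ j).range = ⊥ := by
      intro j hj
      rcases hbt j with h | h
      · exact h
      · exfalso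
        obtain ⟨a, b, hab⟩ := hna
        obtain ⟨x, hx⟩ := (MonoidHom.range_eq_top.mp hi) a
        obtain ⟨y, hy⟩ := (MonoidHom.range_eq_top.mp h) b
        apply hab
        have hc : Commute (Pi.mulSingle (M := fun _ => G) i x) (Pi.mulSingle j y) :=
          Pi.mulSingle_commute (f := fun _ : ι => G) (Ne.symm hj) x y
        simp only [Ψ, MonoidHom.comp_apply, MonoidHom.mulSingle_apply] at hx hy
        have := congrArg ψ hc.eq
        rw [map_mul, map_mul] at this
        simpa [Ψ, hx, hy] using this
    refine ⟨i, Ψ i, MonoidHom.range_eq_top.mp hi, ?_⟩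
    apply MonoidHom.pi_ext
    intro j x
    by_cases h : j = i
    · subst h; simp [Ψ]
    · have h1 : ψ (Pi.mulSingle j x) ∈ (Ψ j).range := ⟨x, rfl⟩
      rw [huniq j h] at h1
      simp only [Subgroup.mem_bot] at h1
      rw [h1]
      simp [Pi.mulSingle_eq_of_ne (Ne.symm h), Ψ]
  · exfalso
    push_neg at hex
    have hall : ∀ j, (Ψ j).range = ⊥ := fun j => (hbt j).resolve_right (hex j)
    have : ψ = 1 := by
      apply MonoidHom.pi_ext
      intro j x
      have h1 : ψ (Pi.mulSingle j x) ∈ (Ψ j).range := ⟨x, rfl⟩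
      rw [hall j] at h1
      simpa using h1
    obtain ⟨a, b, hab⟩ := hna
    obtain ⟨x, hx⟩ := hψ a
    obtain ⟨y, hy⟩ := hψ b
    rw [this] at hx hy
    apply hab
    simp [← hx, ← hy]

lemma diag_surj {F : Type*} [Group F] {G : Type*} [Group G] [Finite G] [IsSimpleGroup G]
    (hna : ∃ a b : G, a * b ≠ b * a)
    {ι : Type*} [Finite ι] (φ : ι → (F →* G)) (hsurj : ∀ i, Function.Surjective (φ i))
    (hpair : ∀ i j, i ≠ j → ∀ α : G →* G, Function.Surjective α → α.comp (φ i) ≠ φ j) :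
    ∀ u : ι → G, ∃ w : F, ∀ i, φ i w = u i := by
  classical
  cases nonempty_fintype ι
  suffices h : ∀ s : Finset ι, ∀ u : ι → G, ∃ w : F, ∀ i ∈ s, φ i w = u i by
    intro u
    obtain ⟨w, hw⟩ := h Finset.univ u
    exact ⟨w, fun i => hw i (Finset.mem_univ i)⟩
  intro s
  induction s using Finset.induction_on with
  | empty => exact fun u => ⟨1, by simp⟩
  | @insert n s hns ih =>
    -- diagonal over s
    set d : F →* ({i // i ∈ s} → G) := Pi.monoidHom (fun i => φ i.val) with hd_def
    have hd : Function.Surjective d := by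
      intro v
      obtain ⟨w, hw⟩ := ih (fun i => if h : i ∈ s then v ⟨i, h⟩ else 1)
      refine ⟨w, funext fun i => ?_⟩
      simpa [d, Pi.monoidHom, i.2] using hw i.val i.2
    set K : Subgroup G := Subgroup.map (φ n) d.ker with hK_def
    have hKnorm : K.Normal := Subgroup.Normal.map (MonoidHom.normal_ker d) (φ n) (hsurj n)
    rcases hKnorm.eq_bot_or_eq_top with hbot | htop
    · -- φ n factors through d; contradiction
      exfalso
      have hker : d.ker ≤ (φ n).ker := by
        intro w hw
        have : φ n w ∈ K := ⟨w, hw, rfl⟩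
        rw [hbot] at this
        simpa [MonoidHom.mem_ker] using this
      set ψ : ({i // i ∈ s} → G) →* G :=
        d.liftOfRightInverse (Function.surjInv hd) (Function.rightInverse_surjInv hd)
          ⟨φ n, hker⟩ with hψ_def
      have hcomp : ∀ w : F, ψ (d w) = φ n w := fun w =>
        d.liftOfRightInverse_comp_apply _ _ ⟨φ n, hker⟩ w
      have hψsurj : Function.Surjective ψ := by
        intro g
        obtain ⟨w, hw⟩ := hsurj n g
        exact ⟨d w, by rw [hcomp, hw]⟩
      obtain ⟨i, α, hαsurj, hfac⟩ := pi_surj_factor hna ψ hψsurj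
      have hne : (i.val : ι) ≠ n := fun h => hns (h ▸ i.2)
      apply hpair i.val n hne α hαsurj
      ext w
      have : ψ (d w) = α ((d w) i) := by rw [hfac]; rfl
      have h2 : (d w) i = φ i.val w := rfl
      simp only [MonoidHom.comp_apply]
      rw [← h2, ← this, hcomp]
    · -- K = ⊤, extend
      intro u
      obtain ⟨w', hw'⟩ := ih u
      have : (φ n w')⁻¹ * u n ∈ K := htop ▸ Subgroup.mem_top _
      obtain ⟨w'', hw''ker, hw''⟩ := this
      refine ⟨w' * w'', fun i hi => ?_⟩
      rcases Finset.mem_insert.mp hi with rfl | hi'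
      · rw [map_mul, hw'', mul_inv_cancel_left]
      · have h1 : φ i w'' = 1 := by
          exact congrFun (show d w'' = 1 from hw''ker) ⟨i, hi'⟩
        rw [map_mul, h1, mul_one, hw' i hi']

/-- The image of the diagonal of all epimorphisms `F₂ → G` consists exactly of
the tuples compatible with the `Aut(G)`-action on epimorphisms. -/
theorem diagonal_image_eq_twisted_diagonal (G : Type*) [Group G] [Finite G]
    [IsSimpleGroup G] (hna : ∃ a b : G, a * b ≠ b * a) :
    Set.range (fun w : FreeGroup (Fin 2) =>
        fun φ : {f : FreeGroup (Fin 2) →* G // Function.Surjective f} => φ.val w)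
      = {u : {f : FreeGroup (Fin 2) →* G // Function.Surjective f} → G |
          ∀ i j : {f : FreeGroup (Fin 2) →* G // Function.Surjective f},
            ∀ α : MulAut G, α.toMonoidHom.comp i.val = j.val →
              α (u i) = u j} := by
  classical
  have hfinS : Finite {f : FreeGroup (Fin 2) →* G // Function.Surjective f} := by
    apply Finite.of_injective
      (f := fun φ : {f : FreeGroup (Fin 2) →* G // Function.Surjective f} =>
        (fun i : Fin 2 => φ.val (FreeGroup.of i)))
    intro a b h
    exact Subtype.ext (FreeGroup.ext_hom _ _ fun i => congrFun h i)
  apply Set.eq_of_subset_of_subset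
  · rintro _ ⟨w, rfl⟩ i j α hα
    simpa using DFunLike.congr_fun hα w
  · intro u hu
    let st : Setoid {f : FreeGroup (Fin 2) →* G // Function.Surjective f} :=
      ⟨fun i j => ∃ α : MulAut G, α.toMonoidHom.comp i.val = j.val, by
        constructor
        · intro i; exact ⟨1, by ext w; simp⟩
        · rintro i j ⟨α, h⟩
          refine ⟨α⁻¹, ?_⟩
          ext w
          have := DFunLike.congr_fun h (FreeGroup.of w)
          simp only [MonoidHom.comp_apply, MulEquiv.coe_toMonoidHom] at this ⊢
          rw [← this]
          exact α.symm_apply_apply _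
        · rintro i j k ⟨α, h⟩ ⟨β, h'⟩
          refine ⟨β * α, ?_⟩
          ext w
          have h1 := DFunLike.congr_fun h (FreeGroup.of w)
          have h2 := DFunLike.congr_fun h' (FreeGroup.of w)
          simp only [MonoidHom.comp_apply, MulEquiv.coe_toMonoidHom] at h1 h2 ⊢
          rw [MulAut.mul_apply, h1, h2]⟩
    let Q := Quotient st
    let φ' : Q → (FreeGroup (Fin 2) →* G) := fun q => (Quotient.out q).val
    have hpair : ∀ q₁ q₂ : Q, q₁ ≠ q₂ → ∀ α : G →* G, Function.Surjective α →
        α.comp (φ' q₁) ≠ φ' q₂ := by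
      intro q₁ q₂ hne α hαs heq
      apply hne
      have hinj : Function.Injective α := Finite.injective_iff_surjective.mpr hαs
      let e : MulAut G := MulEquiv.ofBijective α ⟨hinj, hαs⟩
      have hrel : st.r (Quotient.out q₁) (Quotient.out q₂) := by
        refine ⟨e, ?_⟩
        ext w
        have := DFunLike.congr_fun heq (FreeGroup.of w)
        exact this
      calc q₁ = Quotient.mk st (Quotient.out q₁) := (Quotient.out_eq q₁).symm
        _ = Quotient.mk st (Quotient.out q₂) := Quotient.sound hrel
        _ = q₂ := Quotient.out_eq q₂
    obtain ⟨w, hw⟩ := diag_surj hna φ' (fun q => (Quotient.out q).2) hpair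
      (fun q => u (Quotient.out q))
    refine ⟨w, funext fun j => ?_⟩
    have hrel : st.r (Quotient.out (Quotient.mk st j)) j :=
      Quotient.exact (Quotient.out_eq (Quotient.mk st j))
    obtain ⟨α, hα⟩ := hrel
    have h1 := DFunLike.congr_fun hα w
    simp only [MonoidHom.comp_apply, MulEquiv.coe_toMonoidHom] at h1
    have h2 := hw (Quotient.mk st j)
    have h3 := hu (Quotient.out (Quotient.mk st j)) j α hα
    simp only [φ'] at h2
    show j.val w = u j
    rw [← h1, h2, h3]
end

section
/- Let G be a finite nonabelian simple group and f : G × G → G a function such that (i) f(α(a), α(b)) = α(f(a,b)) for all α ∈ Aut(G) and a,b ∈ G, and (ii) f(a,b) = e whenever ⟨a,b⟩ ≠ G. Then there exists a word w ∈ F_2 such that f(a,b) = w(a,b) for all a,b ∈ G. -/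
namespace EquivWordMap

variable {G : Type*} [Group G]

open scoped commutatorElement

/-- Evaluation of words at a pair. -/
def ev (p : G × G) : FreeGroup (Fin 2) →* G := FreeGroup.lift ![p.1, p.2]

lemma ev_of0 (p : G × G) : ev p (FreeGroup.of 0) = p.1 := by simp [ev]

lemma ev_of1 (p : G × G) : ev p (FreeGroup.of 1) = p.2 := by simp [ev]

lemma range_matrix (a b : G) : Set.range ![a, b] = {a, b} := by
  ext x
  simp [Fin.exists_fin_two, or_comm]

lemma ev_range (p : G × G) : (ev p).range = Subgroup.closure {p.1, p.2} := by
  rw [ev, FreeGroup.range_lift_eq_closure, range_matrix]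

lemma ev_surj {p : G × G} (hp : Subgroup.closure ({p.1, p.2} : Set G) = ⊤) :
    Function.Surjective (ev p) := by
  rw [← MonoidHom.range_eq_top, ev_range, hp]

lemma ev_equiv (α : MulAut G) (p : G × G) (w : FreeGroup (Fin 2)) :
    ev ((α p.1, α p.2) : G × G) w = α (ev p w) := by
  have h : (ev ((α p.1, α p.2) : G × G)) = (α.toMonoidHom).comp (ev p) := by
    apply FreeGroup.ext_hom
    intro i
    fin_cases i <;> simp [ev]
  rw [h]; rfl

lemma gen_map (α : MulAut G) {a b : G} (h : Subgroup.closure ({a, b} : Set G) = ⊤) :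
    Subgroup.closure ({α a, α b} : Set G) = ⊤ := by
  have h2 : Subgroup.map α.toMonoidHom (Subgroup.closure {a, b}) = ⊤ := by
    rw [h]; exact Subgroup.map_top_of_surjective _ α.surjective
  rw [MonoidHom.map_closure] at h2
  simpa [Set.image_pair] using h2

lemma slice_normal (L : Subgroup (G × G)) (hL : ∀ s : G, ∃ x, (x, s) ∈ L) :
    (L.comap (MonoidHom.inr G G)).Normal := by
  constructor
  intro n hn g
  obtain ⟨x, hx⟩ := hL g
  have h2 : ((x, g) * (1, n) * ((x, g))⁻¹ : G × G) ∈ L :=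
    L.mul_mem (L.mul_mem hx hn) (L.inv_mem hx)
  simpa [Subgroup.mem_comap] using h2

lemma slice_normal' (L : Subgroup (G × G)) (hL : ∀ s : G, ∃ y, (s, y) ∈ L) :
    (L.comap (MonoidHom.inl G G)).Normal := by
  constructor
  intro n hn g
  obtain ⟨y, hy⟩ := hL g
  have h2 : ((g, y) * (n, 1) * ((g, y))⁻¹ : G × G) ∈ L :=
    L.mul_mem (L.mul_mem hy hn) (L.inv_mem hy)
  simpa [Subgroup.mem_comap] using h2

lemma eq_top_of_slice (L : Subgroup (G × G)) (h2 : ∀ g : G, ((1 : G), g) ∈ L)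
    (h1 : ∀ g : G, ∃ y, (g, y) ∈ L) : L = ⊤ := by
  rw [Subgroup.eq_top_iff']
  rintro ⟨g, h⟩
  obtain ⟨y, hy⟩ := h1 g
  have := L.mul_mem hy (h2 (y⁻¹ * h))
  simpa [mul_assoc] using this

lemma eq_top_of_slice' (L : Subgroup (G × G)) (h1 : ∀ g : G, ((g : G), (1 : G)) ∈ L)
    (h2 : ∀ h : G, ∃ x, (x, h) ∈ L) : L = ⊤ := by
  rw [Subgroup.eq_top_iff']
  rintro ⟨g, h⟩
  obtain ⟨x, hx⟩ := h2 h
  have := L.mul_mem hx (h1 (x⁻¹ * g))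
  simpa [mul_assoc] using this

lemma commutator_top [IsSimpleGroup G] (hna : ∃ a b : G, a * b ≠ b * a) :
    commutator G = ⊤ := by
  obtain ⟨a, b, hab⟩ := hna
  rcases (Subgroup.commutator_normal (⊤ : Subgroup G) ⊤).eq_bot_or_eq_top with h | h
  · exfalso
    have : ⁅a, b⁆ ∈ commutator G :=
      Subgroup.commutator_mem_commutator (Subgroup.mem_top a) (Subgroup.mem_top b)
    rw [commutator_def, h, Subgroup.mem_bot] at this
    exact hab (commutatorElement_eq_one_iff_mul_comm.mp this)
  · rw [commutator_def, h]

/-- Goursat-type lemma: two generating pairs in distinct `Aut`-orbits have full joint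
word-evaluation range. -/
lemma range_prod_eq_top [Finite G] [IsSimpleGroup G] {p q : G × G}
    (hq : Subgroup.closure ({q.1, q.2} : Set G) = ⊤)
    (hp : Subgroup.closure ({p.1, p.2} : Set G) = ⊤)
    (horb : ¬∃ α : MulAut G, α q.1 = p.1 ∧ α q.2 = p.2) :
    ((ev q).prod (ev p)).range = ⊤ := by
  set L₀ := ((ev q).prod (ev p)).range with hL₀
  have hsq := ev_surj hq
  have hsp := ev_surj hp
  have hproj2 : ∀ s : G, ∃ x, (x, s) ∈ L₀ := by
    intro s
    obtain ⟨w, hw⟩ := hsp s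
    exact ⟨ev q w, ⟨w, by simp [MonoidHom.prod_apply, hw]⟩⟩
  have hproj1 : ∀ s : G, ∃ y, (s, y) ∈ L₀ := by
    intro s
    obtain ⟨w, hw⟩ := hsq s
    exact ⟨ev p w, ⟨w, by simp [MonoidHom.prod_apply, hw]⟩⟩
  have hN2 := (slice_normal L₀ hproj2).eq_bot_or_eq_top
  have hN1 := (slice_normal' L₀ hproj1).eq_bot_or_eq_top
  rcases hN2 with hN2 | hN2
  · rcases hN1 with hN1 | hN1
    · -- both slices trivial: get an automorphism carrying q to p, contradiction
      exfalso
      have hker : (ev q).ker ≤ (ev p).ker := by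
        intro w hw
        have hmem : ((1 : G), ev p w) ∈ L₀ := by
          refine ⟨w, ?_⟩
          rw [MonoidHom.mem_ker] at hw
          simp [MonoidHom.prod_apply, hw]
        have : ev p w ∈ L₀.comap (MonoidHom.inr G G) := hmem
        rw [hN2, Subgroup.mem_bot] at this
        simpa [MonoidHom.mem_ker] using this
      set finv := Function.surjInv hsq with hfinv
      have hri : Function.RightInverse finv (ev q) := Function.rightInverse_surjInv hsq
      set φ : G →* G := (ev q).liftOfRightInverse finv hri ⟨ev p, hker⟩ with hφdef
      have hφ : ∀ w, φ (ev q w) = ev p w := fun w =>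
        (ev q).liftOfRightInverse_comp_apply finv hri ⟨ev p, hker⟩ w
      have hφsurj : Function.Surjective φ := by
        intro g
        obtain ⟨w, hw⟩ := hsp g
        exact ⟨ev q w, by rw [hφ, hw]⟩
      have hφinj : Function.Injective φ := Finite.injective_iff_surjective.mpr hφsurj
      refine horb ⟨MulEquiv.ofBijective φ ⟨hφinj, hφsurj⟩, ?_, ?_⟩
      · show φ q.1 = p.1
        rw [← ev_of0 q, hφ, ev_of0]
      · show φ q.2 = p.2
        rw [← ev_of1 q, hφ, ev_of1]
    · -- left slice full
      refine eq_top_of_slice' L₀ (fun g => ?_) hproj2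
      have : g ∈ L₀.comap (MonoidHom.inl G G) := by rw [hN1]; trivial
      simpa [Subgroup.mem_comap] using this
  · -- right slice full
    refine eq_top_of_slice L₀ (fun g => ?_) hproj1
    have : g ∈ L₀.comap (MonoidHom.inr G G) := by rw [hN2]; trivial
    simpa [Subgroup.mem_comap] using this

lemma inf_ker_normal (S : Set (G × G)) : (⨅ q ∈ S, (ev q).ker).Normal := by
  constructor
  intro n hn g
  simp only [Subgroup.mem_iInf] at hn ⊢
  intro q hq
  exact ((ev q).normal_ker).conj_mem n (hn q hq) g

/-- The key induction: we can prescribe the value at a generating pair `p` while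
keeping value `1` at any finite set of pairs not in the orbit of `p`. -/
lemma main_ind [Finite G] [IsSimpleGroup G] (hna : ∃ a b : G, a * b ≠ b * a)
    (p : G × G) (hp : Subgroup.closure ({p.1, p.2} : Set G) = ⊤) (S : Set (G × G))
    (hS : ∀ q ∈ S, Subgroup.closure ({q.1, q.2} : Set G) = ⊤ →
      ¬∃ α : MulAut G, α q.1 = p.1 ∧ α q.2 = p.2) :
    Subgroup.map (ev p) (⨅ q ∈ S, (ev q).ker) = ⊤ := by
  revert hS
  refine Set.Finite.induction_on S (Set.toFinite S) (fun _ => ?_)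
    @fun q S hqS hSfin ih hS' => ?_
  · 
    simp only [Set.mem_empty_iff_false, iInf_false, iInf_top]
    rw [← MonoidHom.range_eq_map, ev_range, hp]
  · have hC : Subgroup.map (ev p) (⨅ q' ∈ S, (ev q').ker) = ⊤ :=
      ih fun q' hq' => hS' q' (Set.mem_insert_of_mem _ hq')
    set C := ⨅ q' ∈ S, (ev q').ker with hCdef
    set L := Subgroup.map ((ev q).prod (ev p)) C with hLdef
    have hkey : Subgroup.map (ev p) ((ev q).ker ⊓ C) = L.comap (MonoidHom.inr G G) := by
      ext g
      constructor
      · rintro ⟨w, hw, rfl⟩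
        have hw : w ∈ (ev q).ker ⊓ C := hw
        rw [Subgroup.mem_inf] at hw
        refine ⟨w, hw.2, ?_⟩
        have hwk : ev q w = 1 := hw.1
        simp [MonoidHom.prod_apply, hwk]
      · rintro ⟨w, hwC, hw⟩
        have hw' : ev q w = 1 ∧ ev p w = g := by
          simpa [MonoidHom.prod_apply, Prod.ext_iff] using hw
        exact ⟨w, ⟨MonoidHom.mem_ker.mpr hw'.1, hwC⟩, hw'.2⟩
    have hproj2L : ∀ s : G, ∃ x, (x, s) ∈ L := by
      intro s
      have : s ∈ Subgroup.map (ev p) C := by rw [hC]; trivial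
      obtain ⟨w, hwC, hws⟩ := this
      exact ⟨ev q w, ⟨w, hwC, by simp [MonoidHom.prod_apply, hws]⟩⟩
    have hslice : L.comap (MonoidHom.inr G G) = ⊤ := by
      by_cases hgen : Subgroup.closure ({q.1, q.2} : Set G) = ⊤
      · -- q generating, in a different orbit from p
        have horbq := hS' q (Set.mem_insert _ _) hgen
        have hr : ((ev q).prod (ev p)).range = ⊤ := range_prod_eq_top hgen hp horbq
        have hsurj : Function.Surjective ((ev q).prod (ev p)) :=
          MonoidHom.range_eq_top.mp hr
        have hLnorm : L.Normal := (inf_ker_normal S).map _ hsurj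
        have hcomm : ∀ s h : G, ⁅s, h⁆ ∈ L.comap (MonoidHom.inr G G) := by
          intro s h
          obtain ⟨x, hx⟩ := hproj2L h
          have h1 : ((1, s) : G × G) * (x, h) * ((1, s) : G × G)⁻¹ ∈ L :=
            hLnorm.conj_mem _ hx _
          have h2 := L.mul_mem h1 (L.inv_mem hx)
          have heq : ((1, s) : G × G) * (x, h) * ((1, s) : G × G)⁻¹ * ((x, h))⁻¹
              = ((1 : G), ⁅s, h⁆) := by
            simp [Prod.ext_iff, commutatorElement_def, mul_assoc]
          rw [heq] at h2
          exact h2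
        have hle : commutator G ≤ L.comap (MonoidHom.inr G G) := by
          rw [commutator_def]
          exact Subgroup.commutator_le.mpr fun g _ h _ => hcomm g h
        rw [commutator_top hna] at hle
        exact top_unique hle
      · -- q non-generating : counting argument
        have hN := (slice_normal L hproj2L).eq_bot_or_eq_top
        rcases hN with hN | hN
        · exfalso
          -- L injects into closure {q.1, q.2} and surjects onto G
          set π : L →* G := (MonoidHom.fst G G).comp L.subtype with hπ
          have hπinj : Function.Injective π := by
            rw [injective_iff_map_eq_one]
            rintro ⟨⟨x1, x2⟩, hx⟩ h1
            have hx1 : x1 = 1 := h1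
            subst hx1
            have : x2 ∈ L.comap (MonoidHom.inr G G) := hx
            rw [hN, Subgroup.mem_bot] at this
            subst this
            rfl
          have hmemM : ∀ x : L, (x : G × G).1 ∈ Subgroup.closure ({q.1, q.2} : Set G) := by
            rintro ⟨x, hx⟩
            obtain ⟨w, _, rfl⟩ := hx
            rw [← ev_range]
            exact ⟨w, rfl⟩
          set π' : L →* G := (MonoidHom.snd G G).comp L.subtype with hπ'
          have hπ'surj : Function.Surjective π' := by
            intro s
            obtain ⟨x, hx⟩ := hproj2L s
            exact ⟨⟨(x, s), hx⟩, rfl⟩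
          have c1 : Nat.card G ≤ Nat.card L := Nat.card_le_card_of_surjective π' hπ'surj
          have c2 : Nat.card L ≤ Nat.card (Subgroup.closure ({q.1, q.2} : Set G)) := by
            refine Nat.card_le_card_of_injective
              (fun x : L => (⟨(x : G × G).1, hmemM x⟩ :
                Subgroup.closure ({q.1, q.2} : Set G))) ?_
            intro x y hxy
            apply hπinj
            exact (by simpa [Subtype.ext_iff] using hxy : (x : G × G).1 = (y : G × G).1)
          have c3 : Nat.card (Subgroup.closure ({q.1, q.2} : Set G)) < Nat.card G := by
            have hle : Nat.card (Subgroup.closure ({q.1, q.2} : Set G)) ≤ Nat.card G :=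
              Nat.card_le_card_of_injective _ (Subgroup.closure ({q.1, q.2} : Set G)).subtype_injective
            rcases lt_or_eq_of_le hle with h | h
            · exact h
            · exact absurd (Subgroup.eq_top_of_card_eq _ h) hgen
          omega
        · exact hN
    rw [iInf_insert, hkey, hslice]

end EquivWordMap

/-- Any `Aut(G)`-equivariant function `G × G → G` which is trivial on
non-generating pairs is a word map, for `G` finite nonabelian simple. -/
theorem equivariant_function_is_word_map (G : Type*) [Group G] [Finite G]
    [IsSimpleGroup G] (hna : ∃ a b : G, a * b ≠ b * a)
    (f : G × G → G)
    (hequiv : ∀ α : MulAut G, ∀ a b : G, f (α a, α b) = α (f (a, b)))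
    (htriv : ∀ a b : G, Subgroup.closure {a, b} ≠ ⊤ → f (a, b) = 1) :
    ∃ w : FreeGroup (Fin 2), ∀ a b : G,
      f (a, b) = FreeGroup.lift ![a, b] w := by
  classical
  open EquivWordMap in
  have key : ∀ n : ℕ, ∀ w : FreeGroup (Fin 2),
      (∀ q : G × G, Subgroup.closure ({q.1, q.2} : Set G) ≠ ⊤ → ev q w = 1) →
      ({p : G × G | f p ≠ ev p w}).ncard ≤ n →
      ∃ w' : FreeGroup (Fin 2), ∀ p : G × G, f p = ev p w' := by
    intro n
    induction n with
    | zero =>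
      intro w hw h0
      refine ⟨w, fun p => ?_⟩
      have hempty : {p : G × G | f p ≠ ev p w} = ∅ := by
        rw [← Set.ncard_eq_zero (Set.toFinite _)]
        omega
      by_contra hc
      have : p ∈ {p : G × G | f p ≠ ev p w} := hc
      rw [hempty] at this
      exact this
    | succ n ih =>
      intro w hw hcard
      by_cases hB : {p : G × G | f p ≠ ev p w} = ∅
      · refine ⟨w, fun p => ?_⟩
        by_contra hc
        have : p ∈ {p : G × G | f p ≠ ev p w} := hc
        rw [hB] at this
        exact this
      · obtain ⟨p, hpB⟩ := Set.nonempty_iff_ne_empty.mpr hB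
        have hpgen : Subgroup.closure ({p.1, p.2} : Set G) = ⊤ := by
          by_contra hng
          exact hpB (by
            show f p = ev p w
            rw [hw p hng]
            exact htriv p.1 p.2 hng)
        set S := {q : G × G | ¬∃ α : MulAut G, α p.1 = q.1 ∧ α p.2 = q.2} with hSdef
        have hmap := EquivWordMap.main_ind hna p hpgen S (by
          rintro q hq _ ⟨α, h1, h2⟩
          exact hq ⟨α.symm, by rw [← h1, MulEquiv.symm_apply_apply],
            by rw [← h2, MulEquiv.symm_apply_apply]⟩)
        have : (ev p w)⁻¹ * f p ∈ Subgroup.map (ev p) (⨅ q ∈ S, (ev q).ker) := by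
          rw [hmap]; trivial
        obtain ⟨u, huC, huev⟩ := this
        have hu1 : ∀ q ∈ S, ev q u = 1 := by
          intro q hq
          have huC : u ∈ ⨅ q ∈ S, (ev q).ker := huC
          rw [Subgroup.mem_iInf] at huC
          have := huC q
          rw [Subgroup.mem_iInf] at this
          exact this hq
        have hqa : ∀ q : G × G, (¬∃ α : MulAut G, α p.1 = q.1 ∧ α p.2 = q.2) →
            ev q (w * u) = ev q w := by
          intro q hq
          rw [map_mul, hu1 q hq, mul_one]
        have hqb : ∀ q : G × G, (∃ α : MulAut G, α p.1 = q.1 ∧ α p.2 = q.2) →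
            f q = ev q (w * u) := by
          rintro q ⟨α, h1, h2⟩
          have hqe : ((α p.1, α p.2) : G × G) = q := Prod.ext h1 h2
          have hfp : f p = ev p (w * u) := by
            rw [map_mul, huev, ← mul_assoc, mul_inv_cancel, one_mul]
          rw [← hqe, EquivWordMap.ev_equiv α p (w * u)]
          have := hequiv α p.1 p.2
          rw [this, hfp]
        have hsub : {q : G × G | f q ≠ ev q (w * u)} ⊆
            {q : G × G | f q ≠ ev q w} \ {p} := by
          intro q hq
          have hqS : q ∈ S := by
            intro hor
            exact hq (hqb q hor)
          constructor
          · show f q ≠ ev q w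
            rw [← hqa q hqS]
            exact hq
          · intro hqp
            have : q = p := hqp
            subst this
            exact hqS ⟨1, rfl, rfl⟩
        refine ih (w * u) ?_ ?_
        · intro q hng
          have hqS : q ∈ S := by
            rintro ⟨α, h1, h2⟩
            have hqe : ((α p.1, α p.2) : G × G) = q := Prod.ext h1 h2
            rw [← hqe] at hng
            exact hng (EquivWordMap.gen_map α hpgen)
          rw [hqa q hqS]
          exact hw q hng
        · have hlt : ({q : G × G | f q ≠ ev q (w * u)}).ncard <
              ({q : G × G | f q ≠ ev q w}).ncard := by
            calc ({q : G × G | f q ≠ ev q (w * u)}).ncard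
                ≤ ({q : G × G | f q ≠ ev q w} \ {p}).ncard :=
                  Set.ncard_le_ncard hsub (Set.toFinite _)
              _ < ({q : G × G | f q ≠ ev q w}).ncard :=
                  Set.ncard_diff_singleton_lt_of_mem hpB (Set.toFinite _)
          omega
  obtain ⟨w', hw'⟩ := key (Set.univ : Set (G × G)).ncard 1
    (fun q _ => map_one _)
    (Set.ncard_le_ncard (Set.subset_univ _) (Set.toFinite _))
  exact ⟨w', fun a b => hw' (a, b)⟩
end
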